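/- For any multi-agent system M and agent a, the a-distinction Δ_a(M) is a-distinguished: the relation Γ_a on Δ_a(M) is an equivalence relation (in particular, symmetric), and it is a congruence, i.e., if q Γ_a r, (q,q') and (r,r') are transitions, and q' and r' have the same Π_a-observation, then q' Γ_a r'. -/

import Mathlib

/-- Subset-tracking transition relation of the a-distinction `Δₐ(M)`. -/
def deltaDist {Q P : Type*} (δ : Q → Q → Prop) (lab : Q → Set P) (Pa : Set P) :
    (Q × Set Q) → (Q × Set Q) → Prop := fun p p' =>
  δ p.1 p'.1 ∧ p'.2 = {r' | lab r' ∩ Pa = lab p'.1 ∩ Pa ∧ ∃ s' ∈ p.2, δ s' r'}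

section Stmt16Aux

private lemma s16_chain_concat {α : Type*} {R : α → α → Prop} {a b : α} {l : List α} :
    List.Chain R a (l ++ [b]) ↔
      List.Chain R a l ∧ R ((a :: l).getLast (List.cons_ne_nil _ _)) b := by
  induction l generalizing a with
  | nil => simp [List.Chain]
  | cons c l ih =>
    simp only [List.Chain] at ih ⊢
    simp only [List.cons_append, List.isChain_cons_cons, ih, and_assoc]
    rw [List.getLast_cons (List.cons_ne_nil _ _)]

private lemma s16_last_concat {α : Type*} (a : α) (l : List α) (b : α) :
    ((a :: (l ++ [b])).getLast (List.cons_ne_nil _ _)) = b := by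
  simp [List.getLast_append]

variable {Q P : Type*} (δ : Q → Q → Prop) (q0 : Q) (lab : Q → Set P) (Pa : Set P)

/-- The endpoint's first component belongs to its second component. -/
private lemma s16_endMem :
    ∀ ρ : List (Q × Set Q), List.Chain (deltaDist δ lab Pa) (q0, {q0}) ρ →
      ((((q0, {q0}) : Q × Set Q) :: ρ).getLast (List.cons_ne_nil _ _)).1 ∈
        ((((q0, {q0}) : Q × Set Q) :: ρ).getLast (List.cons_ne_nil _ _)).2 := by
  intro ρ
  induction ρ using List.reverseRecOn with
  | nil => intro _; simp
  | append_singleton ρ x ih =>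
    intro hch
    obtain ⟨hch, hstep⟩ := s16_chain_concat.mp hch
    obtain ⟨hδ, hset⟩ := hstep
    rw [s16_last_concat]
    rw [hset]
    exact ⟨rfl, _, ih hch, hδ⟩

/-- The second component of the endpoint is determined by the observation sequence. -/
private lemma s16_setsEq :
    ∀ ρ σ : List (Q × Set Q), List.Chain (deltaDist δ lab Pa) (q0, {q0}) ρ →
      List.Chain (deltaDist δ lab Pa) (q0, {q0}) σ →
      ((((q0, {q0}) : Q × Set Q) :: ρ).map (fun p => lab p.1 ∩ Pa) =
        (((q0, {q0}) : Q × Set Q) :: σ).map (fun p => lab p.1 ∩ Pa)) →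
      ((((q0, {q0}) : Q × Set Q) :: ρ).getLast (List.cons_ne_nil _ _)).2 =
        ((((q0, {q0}) : Q × Set Q) :: σ).getLast (List.cons_ne_nil _ _)).2 := by
  intro ρ
  induction ρ using List.reverseRecOn with
  | nil =>
    intro σ _ _ hobs
    have hlen := congrArg List.length hobs
    simp only [List.length_map, List.length_cons, List.length_nil] at hlen
    have : σ = [] := List.length_eq_zero_iff.mp (by omega)
    subst this
    rfl
  | append_singleton ρ x ih =>
    intro σ hchρ hchσ hobs
    rcases σ.eq_nil_or_concat with rfl | ⟨σ₀, y, rfl⟩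
    · exfalso
      have hlen := congrArg List.length hobs
      simp at hlen
    · rw [List.concat_eq_append] at *
      obtain ⟨hchρ, hstepx⟩ := s16_chain_concat.mp hchρ
      obtain ⟨hchσ, hstepy⟩ := s16_chain_concat.mp hchσ
      have hobs' : ((((q0, {q0}) : Q × Set Q) :: ρ).map (fun p => lab p.1 ∩ Pa))
            ++ [lab x.1 ∩ Pa] =
          ((((q0, {q0}) : Q × Set Q) :: σ₀).map (fun p => lab p.1 ∩ Pa))
            ++ [lab y.1 ∩ Pa] := by
        simpa using hobs
      obtain ⟨hobs₀, hxy⟩ := List.append_inj' hobs' rfl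
      have hxy' : lab x.1 ∩ Pa = lab y.1 ∩ Pa := by simpa using hxy
      have hIH := ih σ₀ hchρ hchσ hobs₀
      rw [s16_last_concat, s16_last_concat, hstepy.2, hstepx.2, hIH, hxy']

/-- Any member of the endpoint's subset is the endpoint of a run with the same
observations (and the same subset component). -/
private lemma s16_liftMem :
    ∀ ρ : List (Q × Set Q), List.Chain (deltaDist δ lab Pa) (q0, {q0}) ρ →
      ∀ t, t ∈ ((((q0, {q0}) : Q × Set Q) :: ρ).getLast (List.cons_ne_nil _ _)).2 →
      ∃ σ, List.Chain (deltaDist δ lab Pa) (q0, {q0}) σ ∧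
        ((((q0, {q0}) : Q × Set Q) :: σ).map (fun p => lab p.1 ∩ Pa) =
          (((q0, {q0}) : Q × Set Q) :: ρ).map (fun p => lab p.1 ∩ Pa)) ∧
        ((((q0, {q0}) : Q × Set Q) :: σ).getLast (List.cons_ne_nil _ _)) =
          (t, ((((q0, {q0}) : Q × Set Q) :: ρ).getLast (List.cons_ne_nil _ _)).2) := by
  intro ρ
  induction ρ using List.reverseRecOn with
  | nil =>
    intro _ t ht
    have : t = q0 := by simpa using ht
    subst this
    exact ⟨[], List.Chain.nil, rfl, rfl⟩
  | append_singleton ρ x ih =>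
    intro hch t ht
    obtain ⟨hch, hstep⟩ := s16_chain_concat.mp hch
    obtain ⟨hδ, hset⟩ := hstep
    rw [s16_last_concat] at ht ⊢
    rw [hset] at ht
    obtain ⟨hlabt, u, hu, hδut⟩ := ht
    obtain ⟨σ₀, hchσ₀, hobsσ₀, hlastσ₀⟩ := ih hch u hu
    refine ⟨σ₀ ++ [(t, x.2)], ?_, ?_, ?_⟩
    · refine s16_chain_concat.mpr ⟨hchσ₀, ?_⟩
      rw [hlastσ₀]
      refine ⟨hδut, ?_⟩
      show x.2 = {r' | lab r' ∩ Pa = lab t ∩ Pa ∧ _}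
      rw [hlabt, hset]
    · simp only [← List.cons_append, List.map_append, List.map_cons, List.map_nil]
      simp only [List.map_cons, List.cons.injEq, true_and] at hobsσ₀
      rw [hobsσ₀, hlabt]
    · rw [s16_last_concat]

end Stmt16Aux

/-- `Δₐ(M)` is a-distinguished: on its reachable states, the relation `Γₐ`
(every run ending in the first state has an a-indistinguishable run ending in the second)
is reflexive, symmetric and transitive, and it is a congruence: if `x Γₐ y`, `(x,x')` and
`(y,y')` are transitions, and `x'`, `y'` have the same `Πₐ`-observation, then `x' Γₐ y'`. -/
theorem stmt16 {Q P : Type*} (δ : Q → Q → Prop) (q0 : Q) (lab : Q → Set P) (Pa : Set P) :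
    let δΔ := deltaDist δ lab Pa
    let q0Δ : Q × Set Q := (q0, {q0})
    let obsRun : List (Q × Set Q) → List (Set P) :=
      fun ρ => (q0Δ :: ρ).map (fun p => lab p.1 ∩ Pa)
    let endsIn : List (Q × Set Q) → (Q × Set Q) → Prop :=
      fun ρ x => (q0Δ :: ρ).getLast (List.cons_ne_nil _ _) = x
    let Reach : (Q × Set Q) → Prop := fun x => ∃ ρ, List.Chain δΔ q0Δ ρ ∧ endsIn ρ x
    let Gamma : (Q × Set Q) → (Q × Set Q) → Prop := fun x y =>
      ∀ ρ, List.Chain δΔ q0Δ ρ → endsIn ρ x →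
        ∃ ρ', List.Chain δΔ q0Δ ρ' ∧ obsRun ρ = obsRun ρ' ∧ endsIn ρ' y
    (∀ x, Reach x → Gamma x x) ∧
    (∀ x y, Reach x → Reach y → Gamma x y → Gamma y x) ∧
    (∀ x y z, Reach x → Reach y → Reach z → Gamma x y → Gamma y z → Gamma x z) ∧
    (∀ x y x' y', Reach x → Reach y → Gamma x y → δΔ x x' → δΔ y y' →
      lab x'.1 ∩ Pa = lab y'.1 ∩ Pa → Gamma x' y') := by
  intro δΔ q0Δ obsRun endsIn Reach Gamma
  -- characterization of Gamma
  have key1 : ∀ x y, Reach x → Gamma x y → y.1 ∈ x.2 ∧ y.2 = x.2 := by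
    rintro x y ⟨ρ, hρ, hend⟩ hG
    obtain ⟨ρ', hρ', hobs, hend'⟩ := hG ρ hρ hend
    have hρ'' : List.Chain (deltaDist δ lab Pa) (q0, {q0}) ρ := hρ
    have hρ''' : List.Chain (deltaDist δ lab Pa) (q0, {q0}) ρ' := hρ'
    have hend2 : ((((q0, {q0}) : Q × Set Q) :: ρ).getLast (List.cons_ne_nil _ _)) = x := hend
    have hend2' : ((((q0, {q0}) : Q × Set Q) :: ρ').getLast (List.cons_ne_nil _ _)) = y := hend'
    have h2 := s16_setsEq δ q0 lab Pa ρ ρ' hρ'' hρ''' hobs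
    rw [hend2, hend2'] at h2
    have h1 := s16_endMem δ q0 lab Pa ρ' hρ'''
    rw [hend2'] at h1
    exact ⟨h2 ▸ h1, h2.symm⟩
  have key2 : ∀ x y, y.1 ∈ x.2 → y.2 = x.2 → Gamma x y := by
    intro x y h1 h2 ρ hρ hend
    have hρ'' : List.Chain (deltaDist δ lab Pa) (q0, {q0}) ρ := hρ
    have hend2 : ((((q0, {q0}) : Q × Set Q) :: ρ).getLast (List.cons_ne_nil _ _)) = x := hend
    obtain ⟨σ, hσ, hobs, hlast⟩ :=
      s16_liftMem δ q0 lab Pa ρ hρ'' y.1 (by rw [hend2]; exact h1)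
    rw [hend2] at hlast
    refine ⟨σ, hσ, hobs.symm, ?_⟩
    show ((((q0, {q0}) : Q × Set Q) :: σ).getLast (List.cons_ne_nil _ _)) = y
    rw [hlast, ← h2]
  have hmem : ∀ x, Reach x → x.1 ∈ x.2 := by
    rintro x ⟨ρ, hρ, hend⟩
    have hρ'' : List.Chain (deltaDist δ lab Pa) (q0, {q0}) ρ := hρ
    have hend2 : ((((q0, {q0}) : Q × Set Q) :: ρ).getLast (List.cons_ne_nil _ _)) = x := hend
    have := s16_endMem δ q0 lab Pa ρ hρ''
    rw [hend2] at this
    exact this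
  refine ⟨?_, ?_, ?_, ?_⟩
  · intro x hx
    exact key2 x x (hmem x hx) rfl
  · intro x y hx _ hG
    obtain ⟨_, h2⟩ := key1 x y hx hG
    exact key2 y x (h2 ▸ hmem x hx) h2.symm
  · intro x y z hx hy _ hxy hyz
    obtain ⟨_, h2⟩ := key1 x y hx hxy
    obtain ⟨h3, h4⟩ := key1 y z hy hyz
    exact key2 x z (h2 ▸ h3) (h4.trans h2)
  · intro x y x' y' hx _ hG hxx' hyy' hobs
    obtain ⟨h1, h2⟩ := key1 x y hx hG
    have hxx : deltaDist δ lab Pa x x' := hxx'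
    have hyy : deltaDist δ lab Pa y y' := hyy'
    obtain ⟨hδx, hx'⟩ := hxx
    obtain ⟨hδy, hy'⟩ := hyy
    refine key2 x' y' ?_ ?_
    · rw [hx']
      exact ⟨hobs.symm, y.1, h1, hδy⟩
    · rw [hy', hx', h2, ← hobs]
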